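/- A matrix φ = [[a, b], [c, e]] ∈ M₂(R) lies in the kernel of D if and only if e = a and b = −z⁻¹·c; and φ lies in the image of D if and only if e = a, b = −z⁻¹·c, and both a and c belong to the principal ideal (z − s)R. -/

import Mathlib

open LaurentPolynomial

lemma TsubC_ne_zero (s : ℂ) : (T 1 - C s : LaurentPolynomial ℂ) ≠ 0 := by
  intro h
  have h2 : Polynomial.toLaurent (Polynomial.X - Polynomial.C s) = (0 : LaurentPolynomial ℂ) := by
    simpa using h
  rw [← map_zero (Polynomial.toLaurent (R := ℂ))] at h2
  exact Polynomial.X_sub_C_ne_zero s (Polynomial.toLaurent_injective h2)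

/-- The matrix `d` of the matrix factorization `F` of `W - 2s`, `W = z + s²/z`,
over `R = ℂ[z,z⁻¹]`. -/
noncomputable def dMat (s : ℂ) : Matrix (Fin 2) (Fin 2) (LaurentPolynomial ℂ) :=
  !![0, T (-1) * (T 1 - C s); T 1 - C s, 0]

/-- The grading sign matrix `ε = diag(1, -1)`. -/
noncomputable def epsMat : Matrix (Fin 2) (Fin 2) (LaurentPolynomial ℂ) :=
  !![1, 0; 0, -1]

/-- The differential of the endomorphism complex `Hom_{CF(W-2s)}(F, F)`:
`D(φ) = d·φ − (ε·φ·ε)·d`. -/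
noncomputable def Dmap (s : ℂ) (φ : Matrix (Fin 2) (Fin 2) (LaurentPolynomial ℂ)) :
    Matrix (Fin 2) (Fin 2) (LaurentPolynomial ℂ) :=
  dMat s * φ - (epsMat * φ * epsMat) * dMat s

lemma Dmap_apply (s : ℂ) (a b c e : LaurentPolynomial ℂ) :
    Dmap s !![a, b; c, e] =
      !![(T 1 - C s) * (T (-1) * c + b),
         T (-1) * (T 1 - C s) * (e - a);
         (T 1 - C s) * (a - e),
         (T 1 - C s) * (b + T (-1) * c)] := by
  ext i j : 1
  fin_cases i <;> fin_cases j <;>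
    · simp [Dmap, dMat, epsMat, Matrix.mul_apply, Fin.sum_univ_two]
      ring

/-- Characterization of the kernel and the image of the differential `D`. -/
theorem kernel_image_of_differential (s : ℂ) (hs : s ≠ 0)
    (a b c e : LaurentPolynomial ℂ) :
    (Dmap s !![a, b; c, e] = 0 ↔ e = a ∧ b = -(T (-1)) * c) ∧
    (!![a, b; c, e] ∈ Set.range (Dmap s) ↔
      e = a ∧ b = -(T (-1)) * c ∧
        a ∈ Ideal.span {T 1 - C s} ∧
        c ∈ Ideal.span {(T 1 - C s : LaurentPolynomial ℂ)}) := by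
  have hu := TsubC_ne_zero s
  constructor
  · rw [Dmap_apply]
    constructor
    · intro h
      have h10 : (T 1 - C s) * (a - e) = 0 := by
        have := congrArg (fun M : Matrix (Fin 2) (Fin 2) (LaurentPolynomial ℂ) => M 1 0) h
        simpa using this
      have h11 : (T 1 - C s) * (b + T (-1) * c) = 0 := by
        have := congrArg (fun M : Matrix (Fin 2) (Fin 2) (LaurentPolynomial ℂ) => M 1 1) h
        simpa using this
      have h10' : a - e = 0 := (mul_eq_zero.1 h10).resolve_left hu
      have h11' : b + T (-1) * c = 0 := (mul_eq_zero.1 h11).resolve_left hu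
      exact ⟨by linear_combination -h10', by linear_combination h11'⟩
    · rintro ⟨he, hb⟩
      subst he hb
      ext i j
      fin_cases i <;> fin_cases j <;> simp <;> ring
  · constructor
    · rintro ⟨ψ, hψ⟩
      rw [Matrix.eta_fin_two ψ, Dmap_apply] at hψ
      have h00 : (T 1 - C s) * (T (-1) * ψ 1 0 + ψ 0 1) = a := by
        have := congrArg (fun M : Matrix (Fin 2) (Fin 2) (LaurentPolynomial ℂ) => M 0 0) hψ
        simpa using this
      have h01 : T (-1) * (T 1 - C s) * (ψ 1 1 - ψ 0 0) = b := by
        have := congrArg (fun M : Matrix (Fin 2) (Fin 2) (LaurentPolynomial ℂ) => M 0 1) hψ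
        simpa using this
      have h10 : (T 1 - C s) * (ψ 0 0 - ψ 1 1) = c := by
        have := congrArg (fun M : Matrix (Fin 2) (Fin 2) (LaurentPolynomial ℂ) => M 1 0) hψ
        simpa using this
      have h11 : (T 1 - C s) * (ψ 0 1 + T (-1) * ψ 1 0) = e := by
        have := congrArg (fun M : Matrix (Fin 2) (Fin 2) (LaurentPolynomial ℂ) => M 1 1) hψ
        simpa using this
      refine ⟨by linear_combination h00 - h11, by linear_combination -h01 - T (-1) * h10, ?_, ?_⟩
      · exact Ideal.mem_span_singleton.2 ⟨_, h00.symm⟩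
      · exact Ideal.mem_span_singleton.2 ⟨_, h10.symm⟩
    · rintro ⟨he, hb, ha, hc⟩
      obtain ⟨x, hx⟩ := Ideal.mem_span_singleton.1 ha
      obtain ⟨y, hy⟩ := Ideal.mem_span_singleton.1 hc
      refine ⟨!![y, x; 0, 0], ?_⟩
      rw [Dmap_apply]
      ext i j
      fin_cases i <;> fin_cases j <;> simp [hx, hy, he, hb] <;> ring
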